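/- Let q ≥ 3, h = 0 and β > β_c. Then there exists z ∈ ((q−2)/q, 1) such that the set of global minimum points of f_{β,0} on the simplex ℋ is exactly the set of the q distinct coordinate permutations of x_z; in particular f_{β,0} has exactly q global minimum points. -/

import Mathlib

open Finset

noncomputable section

namespace CWP
set_option linter.unusedSectionVars false
set_option linter.unusedVariables false
set_option maxHeartbeats 1000000

/-- The probability simplex ℋ in ℝ^q. -/
def simplexH (q : ℕ) : Set (Fin q → ℝ) :=
  {x | (∑ i, x i) = 1 ∧ ∀ i, 0 ≤ x i}

/-- The free-energy functional f_{β,h} of the Curie-Weiss-Potts model. -/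
def fFE (q : ℕ) [NeZero q] (β h : ℝ) (x : Fin q → ℝ) : ℝ :=
  (∑ i, x i * Real.log (q * x i)) - β / 2 * (∑ i, x i ^ 2) - h * x 0

/-- The set of global minimum points of f_{β,h} on the simplex ℋ. -/
def minSetF (q : ℕ) [NeZero q] (β h : ℝ) : Set (Fin q → ℝ) :=
  {x | x ∈ simplexH q ∧ ∀ y ∈ simplexH q, fFE q β h x ≤ fFE q β h y}

/-- h₀ = log(q-1) - 2(q-2)/q. -/
def h0 (q : ℕ) : ℝ := Real.log ((q : ℝ) - 1) - 2 * ((q : ℝ) - 2) / q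

/-- The critical line h_T. -/
def onCriticalLine (q : ℕ) (β h : ℝ) : Prop :=
  0 ≤ h ∧ h < h0 q ∧ h = Real.log ((q : ℝ) - 1) - β * ((q : ℝ) - 2) / (2 * ((q : ℝ) - 1))

/-- The parametrized point x_z. -/
def xpar (q : ℕ) [NeZero q] (z : ℝ) : Fin q → ℝ :=
  fun i => if i = 0 then (1 + z) / 2 else (1 - z) / (2 * ((q : ℝ) - 1))

/-- The critical inverse temperature β_c for q > 2. -/
def betaC (q : ℕ) : ℝ := 2 * ((q : ℝ) - 1) / ((q : ℝ) - 2) * Real.log ((q : ℝ) - 1)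

/- auxiliary -/
def psi (q : ℕ) (β s : ℝ) : ℝ := s * Real.log (q * s) - β / 2 * s ^ 2
def dpsi (q : ℕ) (β s : ℝ) : ℝ := Real.log (q * s) + 1 - β * s
def bz (z : ℝ) : ℝ := (1 + z) / 2
def az (q : ℕ) (z : ℝ) : ℝ := (1 - z) / (2 * ((q : ℝ) - 1))
def Gfun (q : ℕ) (β z : ℝ) : ℝ := dpsi q β (bz z) - dpsi q β (az q z)
def rfun (q : ℕ) (β z : ℝ) : ℝ := psi q β (bz z) + ((q : ℝ) - 1) * psi q β (az q z)
def Sfun (z : ℝ) : ℝ := 2 / (1 - z ^ 2)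
def cconst (q : ℕ) (β : ℝ) : ℝ := β * q / (2 * ((q : ℝ) - 1))
def zstar (q : ℕ) : ℝ := ((q : ℝ) - 2) / q

section basic
variable {q : ℕ} [NeZero q] {β : ℝ}

lemma hQ3 (hq : 3 ≤ q) : (3 : ℝ) ≤ (q : ℝ) := by exact_mod_cast hq
lemma hQ0 (hq : 3 ≤ q) : (0 : ℝ) < (q : ℝ) := by linarith [hQ3 hq]
lemma hQ1 (hq : 3 ≤ q) : (0 : ℝ) < (q : ℝ) - 1 := by linarith [hQ3 hq]
lemma hQ2 (hq : 3 ≤ q) : (0 : ℝ) < (q : ℝ) - 2 := by linarith [hQ3 hq]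

lemma betaC_pos (hq : 3 ≤ q) : 0 < betaC q := by
  have h1 := hQ1 hq; have h2 := hQ2 hq
  have hl : 0 < Real.log ((q : ℝ) - 1) := Real.log_pos (by linarith)
  exact mul_pos (div_pos (by linarith) h2) hl

lemma beta_pos (hq : 3 ≤ q) (hβ : betaC q < β) : 0 < β := lt_trans (betaC_pos hq) hβ

/-- the key inequality from β > β_c -/
lemma crit (hq : 3 ≤ q) (hβ : betaC q < β) :
    2 * Real.log ((q : ℝ) - 1) < β * ((q : ℝ) - 2) / ((q : ℝ) - 1) := by
  have h1 := hQ1 hq; have h2 := hQ2 hq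
  rw [lt_div_iff₀ h1]
  have : betaC q * ((q : ℝ) - 2) < β * ((q : ℝ) - 2) :=
    mul_lt_mul_of_pos_right hβ h2
  calc 2 * Real.log ((q : ℝ) - 1) * ((q : ℝ) - 1) = betaC q * ((q : ℝ) - 2) := by
        unfold betaC; field_simp
    _ < β * ((q : ℝ) - 2) := this

lemma sum_ite_fin (hq : 3 ≤ q) (j : Fin q) (A B : ℝ) :
    (∑ i : Fin q, if i = j then A else B) = A + ((q : ℝ) - 1) * B := by
  have : ∀ i : Fin q, (if i = j then A else B) = B + (if i = j then A - B else 0) := by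
    intro i; by_cases h : i = j <;> simp [h]
  rw [Finset.sum_congr rfl (fun i _ => this i), Finset.sum_add_distrib]
  simp [Finset.sum_ite_eq, Finset.card_univ]
  have : (1:ℝ) ≤ (q:ℝ) := by linarith [hQ3 hq]
  ring

lemma fFE_eq_sum (x : Fin q → ℝ) : fFE q β 0 x = ∑ i, psi q β (x i) := by
  unfold fFE psi
  rw [Finset.sum_sub_distrib, Finset.mul_sum]
  ring

lemma fFE_perm (x : Fin q → ℝ) (π : Equiv.Perm (Fin q)) :
    fFE q β 0 (x ∘ π) = fFE q β 0 x := by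
  rw [fFE_eq_sum, fFE_eq_sum]
  exact Equiv.sum_comp π (fun i => psi q β (x i))

lemma simplex_perm {x : Fin q → ℝ} (hx : x ∈ simplexH q) (π : Equiv.Perm (Fin q)) :
    x ∘ π ∈ simplexH q := by
  refine ⟨?_, fun i => hx.2 (π i)⟩
  rw [show (∑ i, (x ∘ π) i) = ∑ i, x (π i) from rfl, Equiv.sum_comp π x]
  exact hx.1

lemma xpar_mem (hq : 3 ≤ q) {z : ℝ} (hz : z ∈ Set.Icc (-1 : ℝ) 1) :
    xpar q z ∈ simplexH q := by
  have h1 := hQ1 hq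
  constructor
  · rw [show (∑ i, xpar q z i) = ∑ i : Fin q, if i = 0 then (1 + z)/2 else (1 - z)/(2 * ((q:ℝ)-1)) from rfl,
      sum_ite_fin hq]
    field_simp
    ring
  · intro i
    unfold xpar
    by_cases h : i = 0 <;> simp [h]
    · linarith [hz.1]
    · apply div_nonneg (by linarith [hz.2]) (by linarith)

lemma rfun_eq (hq : 3 ≤ q) (z : ℝ) : fFE q β 0 (xpar q z) = rfun q β z := by
  rw [fFE_eq_sum]
  unfold xpar rfun bz az
  rw [show (∑ i : Fin q, psi q β (if i = 0 then (1+z)/2 else (1-z)/(2*((q:ℝ)-1))))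
      = ∑ i : Fin q, if i = 0 then psi q β ((1+z)/2) else psi q β ((1-z)/(2*((q:ℝ)-1))) from
      Finset.sum_congr rfl (fun i _ => by by_cases h : i = 0 <;> simp [h]),
    sum_ite_fin hq]

lemma cont_mul_log (hq : 3 ≤ q) : Continuous (fun s : ℝ => s * Real.log (q * s)) := by
  have hq0 : (q : ℝ) ≠ 0 := by positivity
  have : (fun s : ℝ => s * Real.log (q * s))
      = fun s => (1 / q) * ((q * s) * Real.log (q * s)) := by
    funext s; field_simp
  rw [this]
  exact continuous_const.mul
    (Real.continuous_mul_log.comp (continuous_const.mul continuous_id))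

lemma cont_fFE (hq : 3 ≤ q) : Continuous (fFE q β 0) := by
  unfold fFE
  apply Continuous.sub
  apply Continuous.sub
  · exact continuous_finset_sum _ (fun i _ =>
      (cont_mul_log hq).comp (continuous_apply i))
  · exact continuous_const.mul (continuous_finset_sum _ (fun i _ =>
      (continuous_apply i).pow 2))
  · exact continuous_const.mul (continuous_apply 0)

lemma exists_min (hq : 3 ≤ q) :
    ∃ x ∈ simplexH q, ∀ y ∈ simplexH q, fFE q β 0 x ≤ fFE q β 0 y := by
  have hclosed : IsClosed (simplexH q) := by
    have h1 : IsClosed {x : Fin q → ℝ | (∑ i, x i) = 1} :=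
      isClosed_eq (continuous_finset_sum _ (fun i _ => continuous_apply i)) continuous_const
    have h2 : IsClosed {x : Fin q → ℝ | ∀ i, 0 ≤ x i} := by
      have : {x : Fin q → ℝ | ∀ i, 0 ≤ x i} = ⋂ i, {x : Fin q → ℝ | 0 ≤ x i} := by
        ext x; simp
      rw [this]
      exact isClosed_iInter (fun i => isClosed_le continuous_const (continuous_apply i))
    exact h1.inter h2
  have hsub : simplexH q ⊆ Metric.closedBall 0 1 := by
    intro x hx
    rw [Metric.mem_closedBall, dist_zero_right]
    rw [pi_norm_le_iff_of_nonneg zero_le_one]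
    intro i
    rw [Real.norm_eq_abs, abs_le]
    constructor
    · linarith [hx.2 i]
    · calc x i ≤ ∑ j, x j := Finset.single_le_sum (fun j _ => hx.2 j) (Finset.mem_univ i)
        _ = 1 := hx.1
  have hcompact : IsCompact (simplexH q) :=
    IsCompact.of_isClosed_subset (isCompact_closedBall 0 1) hclosed hsub
  have hne : (simplexH q).Nonempty := by
    refine ⟨fun _ => 1 / q, ?_, fun i => by positivity⟩
    have hq0 : (q : ℝ) ≠ 0 := by positivity
    simp [Finset.sum_const, Finset.card_univ]
  obtain ⟨x, hxs, hxm⟩ := hcompact.exists_isMinOn hne (cont_fFE hq).continuousOn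
  exact ⟨x, hxs, fun y hy => hxm hy⟩

lemma hasDerivAt_psi (hq : 3 ≤ q) {s : ℝ} (hs : 0 < s) :
    HasDerivAt (psi q β) (dpsi q β s) s := by
  have hq0 : (0:ℝ) < q := by
    have h3' : (3:ℝ) ≤ q := by exact_mod_cast hq
    linarith
  have hqs : (q : ℝ) * s ≠ 0 := by positivity
  have h1 : HasDerivAt (fun y : ℝ => y * Real.log y)
      (Real.log ((q:ℝ) * s) + 1) ((q:ℝ) * s) := Real.hasDerivAt_mul_log hqs
  have h2 : HasDerivAt (fun t : ℝ => (q:ℝ) * t) (q : ℝ) s := by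
    simpa using (hasDerivAt_id s).const_mul (q:ℝ)
  have h3 : HasDerivAt (fun t : ℝ => ((q:ℝ) * t) * Real.log ((q:ℝ) * t))
      ((Real.log ((q:ℝ) * s) + 1) * q) s := h1.comp s h2
  have h4 : HasDerivAt (fun t : ℝ => (1/(q:ℝ)) * (((q:ℝ) * t) * Real.log ((q:ℝ) * t)))
      ((1/(q:ℝ)) * ((Real.log ((q:ℝ) * s) + 1) * q)) s := h3.const_mul _
  have h5 : HasDerivAt (fun t : ℝ => t * Real.log ((q:ℝ) * t))
      (Real.log ((q:ℝ) * s) + 1) s := by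
    have he : (fun t : ℝ => (1/(q:ℝ)) * (((q:ℝ) * t) * Real.log ((q:ℝ) * t)))
        = fun t : ℝ => t * Real.log ((q:ℝ) * t) := by
      funext t; field_simp
    rw [he] at h4
    convert h4 using 1
    field_simp
  have h6 : HasDerivAt (fun t : ℝ => β / 2 * t ^ 2) (β * s) s := by
    have := (hasDerivAt_pow 2 s).const_mul (β / 2)
    exact this.congr_deriv (by ring)
  exact h5.sub h6

lemma hasDerivAt_dpsi (hq : 3 ≤ q) {s : ℝ} (hs : 0 < s) :
    HasDerivAt (dpsi q β) (1 / s - β) s := by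
  have hq0 : (0:ℝ) < q := by
    have h3' : (3:ℝ) ≤ q := by exact_mod_cast hq
    linarith
  have hqs : (q : ℝ) * s ≠ 0 := by positivity
  have h1 : HasDerivAt (fun t : ℝ => Real.log ((q:ℝ) * t))
      (1 / ((q:ℝ) * s) * q) s := by
    have hl : HasDerivAt Real.log (((q:ℝ) * s)⁻¹) ((q:ℝ)*s) := Real.hasDerivAt_log hqs
    have h2 : HasDerivAt (fun t : ℝ => (q:ℝ) * t) (q : ℝ) s := by
      simpa using (hasDerivAt_id s).const_mul (q:ℝ)
    have := hl.comp s h2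
    exact this.congr_deriv (by ring)
  have h2 : HasDerivAt (fun t : ℝ => Real.log ((q:ℝ) * t) + 1)
      (1 / ((q:ℝ) * s) * q) s := h1.add_const 1
  have h3 : HasDerivAt (fun t : ℝ => β * t) β s := by
    simpa using (hasDerivAt_id s).const_mul β
  have := h2.sub h3
  exact this.congr_deriv (by rw [div_mul_eq_mul_div, one_mul, div_mul_cancel_left₀ (ne_of_gt hq0), one_div])


end basic

section tweaks
variable {q : ℕ} [NeZero q] {β : ℝ}

def tweak (x : Fin q → ℝ) (i j : Fin q) (t : ℝ) : Fin q → ℝ :=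
  fun k => if k = i then x i + t else if k = j then x j - t else x k

lemma tweak_eq (x : Fin q → ℝ) {i j : Fin q} (hij : i ≠ j) (t : ℝ) :
    tweak x i j t = fun k => x k + (if k = i then t else 0) + (if k = j then -t else 0) := by
  funext k
  unfold tweak
  by_cases h1 : k = i
  · subst h1; simp [hij]
  · by_cases h2 : k = j
    · subst h2; simp [h1, Ne.symm hij]; ring
    · simp [h1, h2]

lemma sum_single' (i : Fin q) (c : ℝ) : (∑ k : Fin q, if k = i then c else 0) = c := by
  simp

lemma tweak_mem {x : Fin q → ℝ} {i j : Fin q} (hij : i ≠ j) (hx : x ∈ simplexH q) {t : ℝ}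
    (h1 : 0 ≤ x i + t) (h2 : 0 ≤ x j - t) : tweak x i j t ∈ simplexH q := by
  constructor
  · rw [show (∑ k, tweak x i j t k) = ∑ k, (x k + (if k = i then t else 0) + (if k = j then -t else 0)) from by rw [tweak_eq x hij]]
    rw [Finset.sum_add_distrib, Finset.sum_add_distrib, sum_single', sum_single', hx.1]
    ring
  · intro k
    unfold tweak
    by_cases hk1 : k = i
    · simp [hk1, h1]
    · by_cases hk2 : k = j
      · subst hk2; simp [Ne.symm hij, h2]
      · simp [hk1, hk2, hx.2 k]

lemma fFE_tweak {x : Fin q → ℝ} {i j : Fin q} (hij : i ≠ j) (t : ℝ) :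
    fFE q β 0 (tweak x i j t) =
      fFE q β 0 x - psi q β (x i) - psi q β (x j) + psi q β (x i + t) + psi q β (x j - t) := by
  rw [fFE_eq_sum, fFE_eq_sum]
  have key : ∀ k : Fin q, psi q β (tweak x i j t k)
      = psi q β (x k) + (if k = i then psi q β (x i + t) - psi q β (x i) else 0)
        + (if k = j then psi q β (x j - t) - psi q β (x j) else 0) := by
    intro k
    unfold tweak
    by_cases h1 : k = i
    · subst h1; simp [hij]
    · by_cases h2 : k = j
      · subst h2; simp [h1]
      · simp [h1, h2]
  rw [Finset.sum_congr rfl (fun k _ => key k), Finset.sum_add_distrib,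
    Finset.sum_add_distrib, sum_single', sum_single']
  ring

lemma min_pos (hq : 3 ≤ q) {x : Fin q → ℝ} (hx : x ∈ minSetF q β 0) (i : Fin q) :
    0 < x i := by
  rcases (hx.1.2 i).lt_or_eq with h | h
  · exact h
  -- x i = 0; derive a contradiction
  exfalso
  have hxi : x i = 0 := h.symm
  -- find j with x j > 0
  have hex : ∃ j, 0 < x j := by
    by_contra hall
    push_neg at hall
    have hz : ∀ j, x j = 0 := fun j => le_antisymm (hall j) (hx.1.2 j)
    have h1 := hx.1.1
    rw [Finset.sum_congr rfl (fun k _ => hz k)] at h1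
    simp at h1
  obtain ⟨j, hj⟩ := hex
  have hij : i ≠ j := by
    intro hh
    rw [← hh, hxi] at hj
    exact lt_irrefl 0 hj
  have hq0 : (0:ℝ) < q := hQ0 hq
  -- the slope function
  set Φ : ℝ → ℝ := fun t => (psi q β t + psi q β (x j - t) - psi q β (x j)) / t with hΦ
  have hC : Filter.Tendsto (fun t => (psi q β (x j - t) - psi q β (x j)) / t)
      (nhdsWithin 0 (Set.Ioi 0)) (nhds (-(dpsi q β (x j)))) := by
    have hinner : HasDerivAt (fun t : ℝ => x j - t) (-1) 0 := (hasDerivAt_id 0).const_sub (x j)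
    have houter : HasDerivAt (psi q β) (dpsi q β (x j)) (x j - 0) := by
      rw [sub_zero]; exact hasDerivAt_psi hq hj
    have hcomp : HasDerivAt (fun t : ℝ => psi q β (x j - t)) (dpsi q β (x j) * (-1)) 0 :=
      houter.comp 0 hinner
    rw [hasDerivAt_iff_tendsto_slope] at hcomp
    have : Filter.Tendsto (slope (fun t : ℝ => psi q β (x j - t)) 0)
        (nhdsWithin 0 (Set.Ioi 0)) (nhds (dpsi q β (x j) * (-1))) :=
      hcomp.mono_left (nhdsWithin_mono 0 (fun t ht => ne_of_gt ht))
    rw [show dpsi q β (x j) * (-1) = -(dpsi q β (x j)) from by ring] at this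
    refine this.congr' ?_
    filter_upwards [self_mem_nhdsWithin] with t ht
    rw [slope_def_field, div_eq_div_iff (by simpa using (ne_of_gt ht)) (ne_of_gt ht)]
    simp
  have hA : Filter.Tendsto (fun t : ℝ => Real.log ((q:ℝ) * t))
      (nhdsWithin 0 (Set.Ioi 0)) Filter.atBot := by
    have hmap : Filter.Tendsto (fun t : ℝ => (q:ℝ) * t)
        (nhdsWithin 0 (Set.Ioi 0)) (nhdsWithin 0 (Set.Ioi 0)) := by
      apply tendsto_nhdsWithin_of_tendsto_nhds_of_eventually_within
      · have : Filter.Tendsto (fun t : ℝ => (q:ℝ) * t) (nhds 0) (nhds ((q:ℝ) * 0)) :=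
          (continuous_const.mul continuous_id).tendsto 0
        rw [mul_zero] at this
        exact this.mono_left nhdsWithin_le_nhds
      · filter_upwards [self_mem_nhdsWithin] with t ht
        exact mul_pos hq0 ht
    exact Real.tendsto_log_nhdsGT_zero.comp hmap
  have hB : Filter.Tendsto (fun t : ℝ => -(β/2) * t + (psi q β (x j - t) - psi q β (x j)) / t)
      (nhdsWithin 0 (Set.Ioi 0)) (nhds (-(β/2) * 0 + -(dpsi q β (x j)))) := by
    exact ((continuous_const.mul continuous_id).tendsto 0 |>.mono_left nhdsWithin_le_nhds).add hC
  have hΦtendsto : Filter.Tendsto Φ (nhdsWithin 0 (Set.Ioi 0)) Filter.atBot := by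
    have hsum := hB.add_atBot hA
    refine (hsum.congr' ?_).mono_left le_rfl
    filter_upwards [self_mem_nhdsWithin] with t ht
    have ht' : t ≠ 0 := ne_of_gt ht
    rw [hΦ]
    unfold psi
    field_simp
    ring
  have hev : ∀ᶠ t in nhdsWithin 0 (Set.Ioi 0), Φ t < 0 := hΦtendsto.eventually_lt_atBot 0
  have hev2 : ∀ᶠ t in nhdsWithin 0 (Set.Ioi 0), t ∈ Set.Ioo (0:ℝ) (x j) :=
    Ioo_mem_nhdsGT_of_mem ⟨le_refl 0, hj⟩
  obtain ⟨t, hΦt, ht0, htj⟩ : ∃ t, Φ t < 0 ∧ 0 < t ∧ t < x j := by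
    rcases (hev.and hev2).exists with ⟨t, h1, h2⟩
    exact ⟨t, h1, h2.1, h2.2⟩
  have hnum : psi q β t + psi q β (x j - t) - psi q β (x j) < 0 := by
    by_contra hge
    push_neg at hge
    exact absurd (div_nonneg hge ht0.le) (not_le.2 hΦt)
  have hmem : tweak x i j t ∈ simplexH q :=
    tweak_mem hij hx.1 (by rw [hxi]; linarith) (by linarith)
  have hlt : fFE q β 0 (tweak x i j t) < fFE q β 0 x := by
    rw [fFE_tweak hij t, hxi]
    have hpsi0 : psi q β 0 = 0 := by simp [psi]
    rw [hpsi0]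
    rw [show (0:ℝ) + t = t from zero_add t]
    linarith
  exact absurd (hx.2 _ hmem) (not_le.2 hlt)

lemma min_dpsi_eq (hq : 3 ≤ q) {x : Fin q → ℝ} (hx : x ∈ minSetF q β 0) {i j : Fin q}
    (hij : i ≠ j) : dpsi q β (x i) = dpsi q β (x j) := by
  have hi := min_pos hq hx i
  have hj := min_pos hq hx j
  set F : ℝ → ℝ := fun t =>
    fFE q β 0 x - psi q β (x i) - psi q β (x j) + psi q β (x i + t) + psi q β (x j - t) with hF
  have hFt : ∀ t, F t = fFE q β 0 (tweak x i j t) := fun t => (fFE_tweak hij t).symm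
  have hF0 : F 0 = fFE q β 0 x := by rw [hF]; simp; ring
  have hmin : IsLocalMin F 0 := by
    have hm : Set.Ioo (-(min (x i) (x j))) (min (x i) (x j)) ∈ nhds (0:ℝ) := by
      apply Ioo_mem_nhds <;> simp [hi, hj]
    filter_upwards [hm] with t ht
    rw [hF0, hFt t]
    apply hx.2
    apply tweak_mem hij hx.1
    · have := ht.1; have h' : -(x i) ≤ -(min (x i) (x j)) := by simp
      linarith [lt_of_le_of_lt h' ht.1]
    · have : t < x j := lt_of_lt_of_le ht.2 (min_le_right _ _)
      linarith
  have hder : HasDerivAt F (dpsi q β (x i) - dpsi q β (x j)) 0 := by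
    have h1 : HasDerivAt (fun t : ℝ => x i + t) 1 0 := by
      simpa using (hasDerivAt_id (0:ℝ)).const_add (x i)
    have h2 : HasDerivAt (fun t : ℝ => x j - t) (-1) 0 := (hasDerivAt_id 0).const_sub (x j)
    have ho1 : HasDerivAt (psi q β) (dpsi q β (x i)) (x i + 0) := by
      rw [add_zero]; exact hasDerivAt_psi hq hi
    have ho2 : HasDerivAt (psi q β) (dpsi q β (x j)) (x j - 0) := by
      rw [sub_zero]; exact hasDerivAt_psi hq hj
    have hc1 : HasDerivAt (fun t : ℝ => psi q β (x i + t)) (dpsi q β (x i) * 1) 0 :=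
      ho1.comp 0 h1
    have hc2 : HasDerivAt (fun t : ℝ => psi q β (x j - t)) (dpsi q β (x j) * (-1)) 0 :=
      ho2.comp 0 h2
    have := (hc1.add hc2).const_add
      (fFE q β 0 x - psi q β (x i) - psi q β (x j))
    rw [hF]
    refine (this.congr_deriv (by ring)).congr_of_eventuallyEq (Filter.Eventually.of_forall fun t => ?_)
    simp only [Pi.add_apply]; ring
  have := hmin.deriv_eq_zero
  rw [hder.deriv] at this
  linarith

lemma dpsi_strictMonoOn (hq : 3 ≤ q) (hβ : 0 < β) :
    StrictMonoOn (dpsi q β) (Set.Ioc 0 (1/β)) := by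
  apply strictMonoOn_of_deriv_pos (convex_Ioc 0 (1/β))
  · intro s hs
    exact (hasDerivAt_dpsi hq hs.1).continuousAt.continuousWithinAt
  · intro s hs
    rw [interior_Ioc] at hs
    rw [(hasDerivAt_dpsi hq hs.1).deriv]
    rw [sub_pos, lt_div_iff₀ hs.1, mul_comm]
    rw [← lt_div_iff₀ hβ]
    exact hs.2

lemma dpsi_strictAntiOn (hq : 3 ≤ q) (hβ : 0 < β) :
    StrictAntiOn (dpsi q β) (Set.Ici (1/β)) := by
  apply strictAntiOn_of_deriv_neg (convex_Ici (1/β))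
  · intro s hs
    have hs0 : 0 < s := lt_of_lt_of_le (by positivity) hs
    exact (hasDerivAt_dpsi hq hs0).continuousAt.continuousWithinAt
  · intro s hs
    rw [interior_Ici] at hs
    have hs0 : 0 < s := lt_trans (by positivity) hs
    rw [(hasDerivAt_dpsi hq hs0).deriv]
    rw [sub_neg, div_lt_iff₀ hs0, mul_comm, ← div_lt_iff₀ hβ]
    exact hs

lemma psi_strictConcaveOn (hq : 3 ≤ q) (hβ : 0 < β) :
    StrictConcaveOn ℝ (Set.Ioi (1/β)) (psi q β) := by
  apply strictConcaveOn_of_deriv2_neg (convex_Ioi (1/β))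
  · intro s hs
    have hs0 : 0 < s := lt_trans (by positivity) hs
    exact (hasDerivAt_psi hq hs0).continuousAt.continuousWithinAt
  · intro s hs
    rw [interior_Ioi] at hs
    have hs0 : 0 < s := lt_trans (by positivity) hs
    have hev : deriv (psi q β) =ᶠ[nhds s] dpsi q β := by
      filter_upwards [Ioi_mem_nhds hs0] with y hy
      exact (hasDerivAt_psi hq hy).deriv
    have : deriv^[2] (psi q β) s = deriv (dpsi q β) s := by
      simp only [Function.iterate_succ, Function.iterate_zero, Function.comp_apply, id]
      exact Filter.EventuallyEq.deriv_eq hev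
    rw [this, (hasDerivAt_dpsi hq hs0).deriv]
    rw [sub_neg, div_lt_iff₀ hs0, mul_comm, ← div_lt_iff₀ hβ]
    exact hs

lemma min_not_both_big (hq : 3 ≤ q) (hβ : 0 < β) {x : Fin q → ℝ} (hx : x ∈ minSetF q β 0)
    {i j : Fin q} (hij : i ≠ j) (hi : 1/β < x i) (hj : 1/β < x j) : False := by
  -- first, x i = x j
  have heq : x i = x j := by
    have := min_dpsi_eq hq hx hij
    exact (dpsi_strictAntiOn hq hβ).injOn hi.le hj.le this
  set b := x i with hb
  have hjb : x j = b := heq.symm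
  have hbβ : 1/β < b := hi
  set t := (b - 1/β)/2 with ht
  have ht0 : 0 < t := by rw [ht]; linarith
  have htb : 1/β < b - t := by rw [ht]; linarith
  have hbt0 : 0 < b - t := lt_trans (by positivity) htb
  -- strict concavity gives psi(b+t)+psi(b-t) < 2 psi b
  have hconc := (psi_strictConcaveOn hq hβ).2
    (Set.mem_Ioi.2 (show 1/β < b + t by linarith)) (Set.mem_Ioi.2 htb)
    (show b + t ≠ b - t by intro hc; linarith)
    (show (0:ℝ) < 1/2 by norm_num) (show (0:ℝ) < 1/2 by norm_num)
    (show (1:ℝ)/2 + 1/2 = 1 by norm_num)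
  have hmid : (1/2 : ℝ) • (b + t) + (1/2 : ℝ) • (b - t) = b := by
    simp only [smul_eq_mul]; ring
  rw [hmid] at hconc
  simp only [smul_eq_mul] at hconc
  have hkey : psi q β (b + t) + psi q β (b - t) < 2 * psi q β b := by linarith
  have hmem : tweak x i j t ∈ simplexH q :=
    tweak_mem hij hx.1 (by linarith [min_pos hq hx i]) (by rw [hjb]; linarith)
  have hlt : fFE q β 0 (tweak x i j t) < fFE q β 0 x := by
    rw [fFE_tweak hij t, hjb, ← hb]
    linarith
  exact absurd (hx.2 _ hmem) (not_le.2 hlt)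

end tweaks

section oned
variable {q : ℕ} [NeZero q] {β : ℝ}

lemma bz_pos {z : ℝ} (hz : -1 < z) : 0 < bz z := by unfold bz; linarith
lemma az_pos (hq : 3 ≤ q) {z : ℝ} (hz : z < 1) : 0 < az q z := by
  unfold az; apply div_pos (by linarith) (by linarith [hQ1 hq])

lemma hasDerivAt_bz (z : ℝ) : HasDerivAt bz (1/2) z := by
  have : HasDerivAt (fun z : ℝ => 1 + z) 1 z := by simpa using (hasDerivAt_id z).const_add 1
  exact this.div_const 2

lemma hasDerivAt_az (hq : 3 ≤ q) (z : ℝ) :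
    HasDerivAt (az q) (-(1/(2 * ((q:ℝ) - 1)))) z := by
  have : HasDerivAt (fun z : ℝ => 1 - z) (-1) z := (hasDerivAt_id z).const_sub 1
  have h2 := this.div_const (2 * ((q:ℝ) - 1))
  exact h2.congr_deriv (by ring)

lemma hasDerivAt_rfun (hq : 3 ≤ q) {z : ℝ} (hz : z ∈ Set.Ioo (-1:ℝ) 1) :
    HasDerivAt (rfun q β) (Gfun q β z / 2) z := by
  have hQ := hQ1 hq
  have h1 : HasDerivAt (fun y => psi q β (bz y)) (dpsi q β (bz z) * (1/2)) z :=
    (hasDerivAt_psi hq (bz_pos hz.1)).comp z (hasDerivAt_bz z)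
  have h2 : HasDerivAt (fun y => psi q β (az q y))
      (dpsi q β (az q z) * (-(1/(2 * ((q:ℝ) - 1))))) z :=
    (hasDerivAt_psi hq (az_pos hq hz.2)).comp z (hasDerivAt_az hq z)
  have := h1.add (h2.const_mul ((q:ℝ) - 1))
  refine this.congr_deriv ?_
  unfold Gfun
  field_simp
  ring

lemma hasDerivAt_Gfun (hq : 3 ≤ q) {z : ℝ} (hz : z ∈ Set.Ioo (-1:ℝ) 1) :
    HasDerivAt (Gfun q β) (Sfun z - cconst q β) z := by
  have hQ := hQ1 hq
  have h1 : HasDerivAt (fun y => dpsi q β (bz y)) ((1/(bz z) - β) * (1/2)) z :=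
    (hasDerivAt_dpsi hq (bz_pos hz.1)).comp z (hasDerivAt_bz z)
  have h2 : HasDerivAt (fun y => dpsi q β (az q y))
      ((1/(az q z) - β) * (-(1/(2 * ((q:ℝ) - 1))))) z :=
    (hasDerivAt_dpsi hq (az_pos hq hz.2)).comp z (hasDerivAt_az hq z)
  have := h1.sub h2
  refine this.congr_deriv ?_
  unfold Sfun cconst bz az
  have hz1 : (1:ℝ) + z ≠ 0 := by linarith [hz.1]
  have hz2 : (1:ℝ) - z ≠ 0 := by linarith [hz.2]
  have hzz : (1:ℝ) - z^2 ≠ 0 := by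
    intro h; nlinarith [hz.1, hz.2]
  field_simp
  ring

lemma xpar_neg_zstar (hq : 3 ≤ q) : xpar q (-(zstar q)) = fun _ : Fin q => 1/(q:ℝ) := by
  have hQ0 := hQ0 hq
  have hQ1 := hQ1 hq
  funext i
  unfold xpar zstar
  by_cases h : i = 0 <;> simp [h] <;> field_simp <;> ring

lemma bz_zstar (hq : 3 ≤ q) : bz (zstar q) = ((q:ℝ)-1)/q := by
  have hQ0 := hQ0 hq
  unfold bz zstar; field_simp; ring

lemma az_zstar (hq : 3 ≤ q) : az q (zstar q) = 1/((q:ℝ)*((q:ℝ)-1)) := by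
  have hQ0 := hQ0 hq
  have hQ1 := hQ1 hq
  unfold az zstar; field_simp; ring

lemma bz_neg_zstar (hq : 3 ≤ q) : bz (-(zstar q)) = 1/(q:ℝ) := by
  have hQ0 := hQ0 hq
  unfold bz zstar; field_simp; ring

lemma az_neg_zstar (hq : 3 ≤ q) : az q (-(zstar q)) = 1/(q:ℝ) := by
  have hQ0 := hQ0 hq
  have hQ1 := hQ1 hq
  unfold az zstar; field_simp; ring

lemma G_neg_zstar (hq : 3 ≤ q) : Gfun q β (-(zstar q)) = 0 := by
  unfold Gfun
  rw [bz_neg_zstar hq, az_neg_zstar hq, sub_self]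

lemma G_zstar_neg (hq : 3 ≤ q) (hβ : betaC q < β) : Gfun q β (zstar q) < 0 := by
  have hQ0 := hQ0 hq
  have hQ1 := hQ1 hq
  have hQ2 := hQ2 hq
  have hkey := crit hq hβ
  unfold Gfun dpsi
  rw [bz_zstar hq, az_zstar hq]
  have hl1 : Real.log ((q:ℝ) * (((q:ℝ)-1)/q)) = Real.log ((q:ℝ)-1) := by
    congr 1; field_simp
  have hl2 : Real.log ((q:ℝ) * (1/((q:ℝ)*((q:ℝ)-1)))) = -Real.log ((q:ℝ)-1) := by
    rw [show (q:ℝ) * (1/((q:ℝ)*((q:ℝ)-1))) = ((q:ℝ)-1)⁻¹ by field_simp, Real.log_inv]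
  rw [hl1, hl2]
  have hba : ((q:ℝ)-1)/q - 1/((q:ℝ)*((q:ℝ)-1)) = ((q:ℝ)-2)/((q:ℝ)-1) := by
    field_simp; ring
  have hβQ : β * (((q:ℝ)-1)/q) - β * (1/((q:ℝ)*((q:ℝ)-1))) = β * ((q:ℝ)-2)/((q:ℝ)-1) := by
    rw [← mul_sub, hba]; ring
  linarith [hβQ]

lemma rz_lt (hq : 3 ≤ q) (hβ : betaC q < β) :
    rfun q β (zstar q) < rfun q β (-(zstar q)) := by
  have hQ0 := hQ0 hq
  have hQ1 := hQ1 hq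
  have hQ2 := hQ2 hq
  have hkey := crit hq hβ
  set L := Real.log ((q:ℝ)-1) with hL
  have h2 : rfun q β (-(zstar q)) = -β/(2*(q:ℝ)) := by
    unfold rfun psi
    rw [bz_neg_zstar hq, az_neg_zstar hq]
    rw [show (q:ℝ) * (1/(q:ℝ)) = 1 by field_simp, Real.log_one]
    field_simp
    ring
  have h1 : rfun q β (zstar q)
      = (((q:ℝ)-2)/q)*L - β/2*((((q:ℝ)-1)^2/(q:ℝ)^2) + 1/((q:ℝ)^2*((q:ℝ)-1))) := by
    unfold rfun psi
    rw [bz_zstar hq, az_zstar hq]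
    rw [show (q:ℝ) * (((q:ℝ)-1)/q) = (q:ℝ)-1 by field_simp,
      show (q:ℝ) * (1/((q:ℝ)*((q:ℝ)-1))) = ((q:ℝ)-1)⁻¹ by field_simp, Real.log_inv, ← hL]
    field_simp
    ring
  rw [h1, h2]
  have hmul : (((q:ℝ)-2)/q)*L < β*((q:ℝ)-2)^2/(2*(q:ℝ)*((q:ℝ)-1)) := by
    have hpos : (0:ℝ) < ((q:ℝ)-2)/(2*(q:ℝ)) := by positivity
    have := mul_lt_mul_of_pos_left hkey hpos
    have hl : ((q:ℝ)-2)/(2*(q:ℝ)) * (2*L) = (((q:ℝ)-2)/q)*L := by field_simp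
    have hr : ((q:ℝ)-2)/(2*(q:ℝ)) * (β*((q:ℝ)-2)/((q:ℝ)-1)) = β*((q:ℝ)-2)^2/(2*(q:ℝ)*((q:ℝ)-1)) := by
      field_simp
    rw [hl, hr] at this
    exact this
  have hid : β*((q:ℝ)-2)^2/(2*(q:ℝ)*((q:ℝ)-1))
      - β/2*((((q:ℝ)-1)^2/(q:ℝ)^2) + 1/((q:ℝ)^2*((q:ℝ)-1))) = -β/(2*(q:ℝ)) := by
    field_simp
    ring
  linarith

lemma Sfun_lt {u y : ℝ} (h2 : -1 < y) (hy1 : y < 1) (h : u^2 < y^2) : Sfun u < Sfun y := by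
  have hy : 0 < 1 - y^2 := by nlinarith
  have hu : 1 - y^2 < 1 - u^2 := by nlinarith
  exact div_lt_div_of_pos_left two_pos hy hu

end oned

section structure_lemmas
variable {q : ℕ} [NeZero q] {β : ℝ}

lemma zstar_mem (hq : 3 ≤ q) : zstar q ∈ Set.Icc (-1:ℝ) 1 := by
  have h0 := hQ0 hq; have h2 := hQ2 hq
  constructor
  · have : (0:ℝ) ≤ zstar q := div_nonneg (by linarith) (by linarith)
    linarith
  · unfold zstar; rw [div_le_one h0]; linarith

lemma zstar_pos (hq : 3 ≤ q) : 0 < zstar q := div_pos (hQ2 hq) (hQ0 hq)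

lemma zstar_lt_one (hq : 3 ≤ q) : zstar q < 1 := by
  unfold zstar; rw [div_lt_one (hQ0 hq)]; linarith

lemma min_structure (hq : 3 ≤ q) (hβ : betaC q < β) {x : Fin q → ℝ}
    (hx : x ∈ minSetF q β 0) :
    ∃ (i₀ : Fin q) (w : ℝ), w ∈ Set.Ioo (-1:ℝ) 1 ∧ 1/β < bz w ∧ az q w ≤ 1/β ∧
      Gfun q β w = 0 ∧ x = xpar q w ∘ (Equiv.swap 0 i₀) := by
  have hβ0 := beta_pos hq hβ
  have hQ1 := hQ1 hq
  have hpos := min_pos hq hx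
  by_cases hbig : ∃ i₀, 1/β < x i₀
  · obtain ⟨i₀, hi₀⟩ := hbig
    have huniq : ∀ j, j ≠ i₀ → x j ≤ 1/β := by
      intro j hj
      by_contra hgt
      push_neg at hgt
      exact min_not_both_big hq hβ0 hx hj hgt hi₀
    haveI : Nontrivial (Fin q) := Fin.nontrivial_iff_two_le.mpr (by omega)
    obtain ⟨j₀, hj₀⟩ := exists_ne i₀
    have hxk : ∀ k, k ≠ i₀ → x k = x j₀ := by
      intro k hk
      by_cases hkj : k = j₀
      · rw [hkj]
      · exact (dpsi_strictMonoOn hq hβ0).injOn ⟨hpos k, huniq k hk⟩ ⟨hpos j₀, huniq j₀ hj₀⟩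
          (min_dpsi_eq hq hx hkj)
    have hsum : x i₀ + ((q:ℝ)-1) * x j₀ = 1 := by
      have h1 : (∑ k, x k) = ∑ k : Fin q, if k = i₀ then x i₀ else x j₀ := by
        apply Finset.sum_congr rfl
        intro k _
        by_cases hk : k = i₀
        · simp [hk]
        · simp [hk, hxk k hk]
      have h2 := hx.1.1
      rw [h1, sum_ite_fin hq] at h2
      exact h2
    refine ⟨i₀, 2 * x i₀ - 1, ?_, ?_, ?_, ?_, ?_⟩
    · constructor
      · have := hpos i₀; linarith
      · have ha := hpos j₀
        have : 0 < ((q:ℝ)-1) * x j₀ := mul_pos (by linarith) ha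
        linarith
    · unfold bz
      have : (1 + (2 * x i₀ - 1)) / 2 = x i₀ := by ring
      rw [this]; exact hi₀
    · unfold az
      have hv : (1 - (2 * x i₀ - 1)) / (2 * ((q:ℝ) - 1)) = x j₀ := by
        rw [div_eq_iff (by positivity : (2 * ((q:ℝ) - 1)) ≠ 0)]
        linear_combination -2 * hsum
      rw [hv]; exact huniq j₀ hj₀
    · unfold Gfun
      have hb : bz (2 * x i₀ - 1) = x i₀ := by unfold bz; ring_nf
      have ha : az q (2 * x i₀ - 1) = x j₀ := by
        unfold az
        rw [div_eq_iff (by positivity : (2 * ((q:ℝ) - 1)) ≠ 0)]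
        linear_combination -2 * hsum
      rw [hb, ha, min_dpsi_eq hq hx (Ne.symm hj₀), sub_self]
    · funext j
      have hb : bz (2 * x i₀ - 1) = x i₀ := by unfold bz; ring_nf
      have ha : az q (2 * x i₀ - 1) = x j₀ := by
        unfold az
        rw [div_eq_iff (by positivity : (2 * ((q:ℝ) - 1)) ≠ 0)]
        linear_combination -2 * hsum
      show x j = xpar q (2 * x i₀ - 1) ((Equiv.swap 0 i₀) j)
      unfold xpar
      by_cases hj : j = i₀
      · subst hj
        rw [Equiv.swap_apply_right]
        split_ifs with h0
        · unfold bz at hb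
          linarith [hb]
        · exact absurd rfl h0
      · have hne : (Equiv.swap 0 i₀) j ≠ 0 := by
          intro hc
          have : (Equiv.swap 0 i₀) j = (Equiv.swap 0 i₀) i₀ := by
            rw [hc, Equiv.swap_apply_right]
          exact hj ((Equiv.swap 0 i₀).injective this)
        rw [if_neg hne]
        unfold az at ha
        rw [hxk j hj]
        linarith [ha]
  · push_neg at hbig
    exfalso
    have hconst : ∀ k, x k = x 0 := by
      intro k
      by_cases hk : k = 0
      · rw [hk]
      · exact (dpsi_strictMonoOn hq hβ0).injOn ⟨hpos k, hbig k⟩ ⟨hpos 0, hbig 0⟩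
          (min_dpsi_eq hq hx hk)
    have hsum : ((q:ℝ)) * x 0 = 1 := by
      have := hx.1.1
      rw [Finset.sum_congr rfl (fun k _ => hconst k)] at this
      simpa [Finset.sum_const, Finset.card_univ] using this
    have hx0 : x 0 = 1/(q:ℝ) := by
      rw [eq_div_iff (ne_of_gt (hQ0 hq))] at *
      linarith
    have hxeq : x = xpar q (-(zstar q)) := by
      rw [xpar_neg_zstar hq]
      funext k
      rw [hconst k, hx0]
    have hle := hx.2 (xpar q (zstar q)) (xpar_mem hq (zstar_mem hq))
    rw [hxeq, rfun_eq hq, rfun_eq hq] at hle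
    exact absurd hle (not_le.2 (rz_lt hq hβ))

lemma G_strictMonoOn (hq : 3 ≤ q) {u v : ℝ} (hu : -1 < u) (hv : v < 1)
    (hS : ∀ y ∈ Set.Ioo u v, cconst q β < Sfun y) :
    StrictMonoOn (Gfun q β) (Set.Icc u v) := by
  apply strictMonoOn_of_deriv_pos (convex_Icc u v)
  · intro y hy
    exact (hasDerivAt_Gfun hq ⟨lt_of_lt_of_le hu hy.1, lt_of_le_of_lt hy.2 hv⟩).continuousAt.continuousWithinAt
  · intro y hy
    rw [interior_Icc] at hy
    rw [(hasDerivAt_Gfun hq ⟨lt_trans hu hy.1, lt_trans hy.2 hv⟩).deriv]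
    linarith [hS y hy]

lemma path_second_order (hq : 3 ≤ q) {w : ℝ} (hmem : xpar q w ∈ minSetF q β 0)
    (hw : w ∈ Set.Ioo (-1:ℝ) 1) (hG : Gfun q β w = 0) : cconst q β ≤ Sfun w := by
  by_contra hcon
  push_neg at hcon
  have hzz : (1:ℝ) - w^2 ≠ 0 := by nlinarith [hw.1, hw.2]
  have hScont : ContinuousAt Sfun w := by
    unfold Sfun
    exact (continuousAt_const.div (by fun_prop) hzz)
  have h1 : ∀ᶠ y in nhds w, Sfun y < cconst q β := hScont.eventually_lt continuousAt_const hcon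
  have h2 : ∀ᶠ y in nhds w, y ∈ Set.Ioo (-1:ℝ) 1 := isOpen_Ioo.eventually_mem hw
  rw [Metric.eventually_nhds_iff] at h1 h2
  obtain ⟨ε1, hε1, hb1⟩ := h1
  obtain ⟨ε2, hε2, hb2⟩ := h2
  set δ := min ε1 ε2 / 2 with hδ
  have hδ0 : 0 < δ := by positivity
  have hkey : ∀ y ∈ Set.Icc w (w + δ), Sfun y < cconst q β ∧ y ∈ Set.Ioo (-1:ℝ) 1 := by
    intro y hy
    have hd : dist y w < min ε1 ε2 := by
      rw [Real.dist_eq, abs_lt]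
      constructor <;> [linarith [hy.1, lt_min hε1 hε2]; linarith [hy.2, hδ0]]
    exact ⟨hb1 (lt_of_lt_of_le hd (min_le_left _ _)), hb2 (lt_of_lt_of_le hd (min_le_right _ _))⟩
  -- G is strictly decreasing on [w, w+δ]
  have hGanti : StrictAntiOn (Gfun q β) (Set.Icc w (w + δ)) := by
    apply strictAntiOn_of_deriv_neg (convex_Icc _ _)
    · intro y hy
      exact (hasDerivAt_Gfun hq (hkey y hy).2).continuousAt.continuousWithinAt
    · intro y hy
      rw [interior_Icc] at hy
      have hy' : y ∈ Set.Icc w (w + δ) := ⟨hy.1.le, hy.2.le⟩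
      rw [(hasDerivAt_Gfun hq (hkey y hy').2).deriv]
      linarith [(hkey y hy').1]
  have hGneg : ∀ y ∈ Set.Ioc w (w + δ), Gfun q β y < 0 := by
    intro y hy
    have := hGanti (Set.left_mem_Icc.2 (by linarith)) ⟨hy.1.le, hy.2⟩ hy.1
    rw [hG] at this
    exact this
  have hranti : StrictAntiOn (rfun q β) (Set.Icc w (w + δ)) := by
    apply strictAntiOn_of_deriv_neg (convex_Icc _ _)
    · intro y hy
      exact (hasDerivAt_rfun hq (hkey y hy).2).continuousAt.continuousWithinAt
    · intro y hy
      rw [interior_Icc] at hy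
      have hy' : y ∈ Set.Icc w (w + δ) := ⟨hy.1.le, hy.2.le⟩
      rw [(hasDerivAt_rfun hq (hkey y hy').2).deriv]
      have := hGneg y ⟨hy.1, hy.2.le⟩
      linarith
  have hlt : rfun q β (w + δ) < rfun q β w :=
    hranti (Set.left_mem_Icc.2 (by linarith)) (Set.right_mem_Icc.2 (by linarith)) (by linarith)
  have hmemδ : xpar q (w + δ) ∈ simplexH q := by
    apply xpar_mem hq
    have := (hkey (w + δ) (Set.right_mem_Icc.2 (by linarith))).2
    exact ⟨this.1.le, this.2.le⟩
  have hle := hmem.2 _ hmemδ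
  rw [rfun_eq hq, rfun_eq hq] at hle
  linarith

lemma loc (hq : 3 ≤ q) (hβ : betaC q < β) {w : ℝ} (hG0 : Gfun q β w = 0)
    (hS : cconst q β ≤ Sfun w) (hlb : -(zstar q) < w) (hub : w < 1) : zstar q < w := by
  have hz0 := zstar_pos hq
  have hz1 := zstar_lt_one hq
  by_contra hcon
  push_neg at hcon
  rcases lt_or_ge w 0 with hneg | hnn
  · have hmono : StrictMonoOn (Gfun q β) (Set.Icc (-(zstar q)) w) := by
      apply G_strictMonoOn hq (by linarith) (by linarith)
      intro y hy
      have ha1 : 0 < w - y := by linarith [hy.2]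
      have ha2 : 0 < -(w + y) := by linarith [hy.2]
      have hSy : Sfun w < Sfun y := Sfun_lt (by linarith [hy.1]) (by linarith [hy.2])
        (by nlinarith [mul_pos ha1 ha2])
      linarith
    have := hmono (Set.left_mem_Icc.2 hlb.le) (Set.right_mem_Icc.2 hlb.le) hlb
    rw [G_neg_zstar hq, hG0] at this
    exact lt_irrefl 0 this
  · have hwz : w < zstar q := by
      rcases hcon.lt_or_eq with h | h
      · exact h
      · exfalso; rw [h] at hG0; exact absurd hG0 (ne_of_lt (G_zstar_neg hq hβ))
    have hmono : StrictMonoOn (Gfun q β) (Set.Icc w (zstar q)) := by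
      apply G_strictMonoOn hq (by linarith) (by linarith)
      intro y hy
      have ha1 : 0 < y - w := by linarith [hy.1]
      have ha2 : 0 < y + w := by linarith [hy.1]
      have hSy : Sfun w < Sfun y := Sfun_lt (by linarith [hy.1]) (by linarith [hy.2])
        (by nlinarith [mul_pos ha1 ha2])
      linarith
    have := hmono (Set.left_mem_Icc.2 hwz.le) (Set.right_mem_Icc.2 hwz.le) hwz
    rw [hG0] at this
    exact absurd (lt_trans this (G_zstar_neg hq hβ)) (lt_irrefl 0)

lemma uniq (hq : 3 ≤ q) {w₁ w₂ : ℝ}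
    (h1G : Gfun q β w₁ = 0) (h2G : Gfun q β w₂ = 0)
    (h1S : cconst q β ≤ Sfun w₁) (h2S : cconst q β ≤ Sfun w₂)
    (h1l : zstar q < w₁) (h1u : w₁ < 1) (h2l : zstar q < w₂) (h2u : w₂ < 1) : w₁ = w₂ := by
  have hz0 := zstar_pos hq
  have key : ∀ u v : ℝ, zstar q < u → u < v → v < 1 →
      Gfun q β u = 0 → Gfun q β v = 0 → cconst q β ≤ Sfun u → False := by
    intro u v hu huv hv hGu hGv hSu
    have hmono : StrictMonoOn (Gfun q β) (Set.Icc u v) := by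
      apply G_strictMonoOn hq (by linarith) hv
      intro y hy
      have ha1 : 0 < y - u := by linarith [hy.1]
      have ha2 : 0 < y + u := by linarith [hy.1]
      have : Sfun u < Sfun y := Sfun_lt (by linarith [hy.1]) (by linarith [hy.2])
        (by nlinarith [mul_pos ha1 ha2])
      linarith
    have := hmono (Set.left_mem_Icc.2 huv.le) (Set.right_mem_Icc.2 huv.le) huv
    rw [hGu, hGv] at this
    exact lt_irrefl 0 this
  rcases lt_trichotomy w₁ w₂ with h | h | h
  · exact absurd (key w₁ w₂ h1l h h2u h1G h2G h1S) not_false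
  · exact h
  · exact absurd (key w₂ w₁ h2l h h1u h2G h1G h2S) not_false

end structure_lemmas

section main
variable {q : ℕ} [NeZero q] {β : ℝ}

lemma xpar_apply (z : ℝ) (j : Fin q) : xpar q z j = if j = 0 then bz z else az q z := rfl

lemma neg_zstar_lt (hq : 3 ≤ q) {w : ℝ} (hba : az q w < bz w) : -(zstar q) < w := by
  have hQ0 := hQ0 hq
  have hQ1 := hQ1 hq
  unfold bz az at hba
  rw [div_lt_div_iff₀ (by positivity) (by norm_num)] at hba
  unfold zstar
  rw [neg_lt, lt_div_iff₀ hQ0]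
  nlinarith [hba]

lemma xpar_min_of_perm (hq : 3 ≤ q) {x : Fin q → ℝ} {w : ℝ} {i₀ : Fin q}
    (hx : x ∈ minSetF q β 0) (hw : w ∈ Set.Ioo (-1:ℝ) 1)
    (hxeq : x = xpar q w ∘ (Equiv.swap 0 i₀)) : xpar q w ∈ minSetF q β 0 := by
  refine ⟨xpar_mem hq ⟨hw.1.le, hw.2.le⟩, fun y hy => ?_⟩
  have h1 : fFE q β 0 (xpar q w) = fFE q β 0 x := by rw [hxeq, fFE_perm]
  rw [h1]
  exact hx.2 y hy

theorem stmt_3' (hq : 3 ≤ q) (hβ : betaC q < β) :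
    ∃ z : ℝ, ((q : ℝ) - 2) / q < z ∧ z < 1 ∧
      minSetF q β 0 = {y | ∃ π : Equiv.Perm (Fin q), y = xpar q z ∘ π} ∧
      (minSetF q β 0).ncard = q := by
  obtain ⟨x₀, hx₀s, hx₀m⟩ := exists_min (β := β) hq
  have hx₀ : x₀ ∈ minSetF q β 0 := ⟨hx₀s, hx₀m⟩
  obtain ⟨i₀, w, hwIoo, hbw, haw, hGw, hxeq⟩ := min_structure hq hβ hx₀
  have hxpar_min : xpar q w ∈ minSetF q β 0 := xpar_min_of_perm hq hx₀ hwIoo hxeq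
  have hSw := path_second_order hq hxpar_min hwIoo hGw
  have hlbw : -(zstar q) < w := neg_zstar_lt hq (lt_of_le_of_lt haw hbw)
  have hzw : zstar q < w := loc hq hβ hGw hSw hlbw hwIoo.2
  have hset : minSetF q β 0 = {y | ∃ π : Equiv.Perm (Fin q), y = xpar q w ∘ π} := by
    ext y
    constructor
    · intro hy
      obtain ⟨i₁, w', hw'Ioo, hbw', haw', hGw', hyeq⟩ := min_structure hq hβ hy
      have hx'min : xpar q w' ∈ minSetF q β 0 := xpar_min_of_perm hq hy hw'Ioo hyeq
      have hSw' := path_second_order hq hx'min hw'Ioo hGw'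
      have hlbw' : -(zstar q) < w' := neg_zstar_lt hq (lt_of_le_of_lt haw' hbw')
      have hzw' : zstar q < w' := loc hq hβ hGw' hSw' hlbw' hw'Ioo.2
      have hww : w' = w := uniq hq hGw' hGw hSw' hSw hzw' hw'Ioo.2 hzw hwIoo.2
      exact ⟨Equiv.swap 0 i₁, by rw [hyeq, hww]⟩
    · rintro ⟨π, rfl⟩
      refine ⟨simplex_perm hxpar_min.1 π, fun z hz => ?_⟩
      rw [fFE_perm]
      exact hxpar_min.2 z hz
  refine ⟨w, hzw, hwIoo.2, hset, ?_⟩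
  have hbane : bz w ≠ az q w := ne_of_gt (lt_of_le_of_lt haw hbw)
  have hgdef : {y | ∃ π : Equiv.Perm (Fin q), y = xpar q w ∘ π}
      = Set.range (fun i : Fin q => (fun j : Fin q => if j = i then bz w else az q w)) := by
    ext y
    simp only [Set.mem_setOf_eq, Set.mem_range]
    constructor
    · rintro ⟨π, rfl⟩
      refine ⟨π.symm 0, funext fun j => ?_⟩
      show (if j = π.symm 0 then bz w else az q w) = (xpar q w ∘ π) j
      rw [Function.comp_apply, xpar_apply]
      exact if_congr (Equiv.apply_eq_iff_eq_symm_apply π).symm rfl rfl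
    · rintro ⟨i, rfl⟩
      refine ⟨Equiv.swap 0 i, funext fun j => ?_⟩
      show (if j = i then bz w else az q w) = (xpar q w ∘ (Equiv.swap 0 i)) j
      rw [Function.comp_apply, xpar_apply]
      refine if_congr ?_ rfl rfl
      constructor
      · rintro rfl
        exact Equiv.swap_apply_right 0 j
      · intro h
        exact (Equiv.swap 0 i).injective (h.trans (Equiv.swap_apply_right 0 i).symm)
  rw [hset, hgdef]
  have hinj : Function.Injective
      (fun i : Fin q => (fun j : Fin q => if j = i then bz w else az q w)) := by
    intro i i' h
    by_contra hne
    have hc := congrFun h i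
    simp only [if_pos rfl, if_neg hne] at hc
    exact hbane hc
  rw [← Set.image_univ, Set.ncard_image_of_injective _ hinj, Set.ncard_univ,
    Nat.card_eq_fintype_card, Fintype.card_fin]

end main

/-- For h = 0 and β > β_c there is z ∈ ((q-2)/q,1) such that the set of global
minimum points of f_{β,0} on ℋ is exactly the set of the q coordinate
permutations of x_z; in particular there are exactly q global minimum points. -/
theorem stmt_3 (q : ℕ) [NeZero q] (hq : 3 ≤ q) (β : ℝ) (hβ : betaC q < β) :
    ∃ z : ℝ, ((q : ℝ) - 2) / q < z ∧ z < 1 ∧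
      minSetF q β 0 = {y | ∃ π : Equiv.Perm (Fin q), y = xpar q z ∘ π} ∧
      (minSetF q β 0).ncard = q := by
  exact stmt_3' hq hβ

end CWP
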